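/- Fix an integer n ≥ 4 and a point P ∈ B of infinite order. Then: (i) for integers x_1, …, x_n one has (2x_1² + x_2² + x_3² + ⋯ + x_n²)·P = 0 if and only if (x_1, …, x_n) = (0, …, 0); and (ii) for every group homomorphism r : B → C into a finite abelian group C there exist integers x_1, …, x_n with gcd(x_1, …, x_n) = 1 such that r((2x_1² + x_2² + x_3² + ⋯ + x_n²)·P) = 0. -/

import Mathlib

-- 2-adic lemma
lemma two_pow_lemma : ∀ k : ℕ, ∃ b : ℤ, Odd b ∧ ((2:ℤ)^(k+3)) ∣ b^2 + 7 := by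
  intro k
  induction k with
  | zero => exact ⟨1, ⟨0, by ring⟩, by norm_num⟩
  | succ k ih =>
    obtain ⟨b, hb, t, ht⟩ := ih
    rcases Int.even_or_odd t with ⟨u, hu⟩ | ⟨u, hu⟩
    · exact ⟨b, hb, u, by rw [ht, hu]; ring⟩
    · refine ⟨b + 2^(k+2), hb.add_even (⟨2^(k+1), by ring⟩) , ?_⟩
      obtain ⟨v, hv⟩ := hb
      refine ⟨(t + b)/2 + 2^k, ?_⟩
      have h2 : t + b = 2 * (u + v + 1) := by omega
      rw [h2]
      have : (b + 2 ^ (k + 2)) ^ 2 + 7 = (b^2 + 7) + 2^(k+3)*b + 2^(k+2)*2^(k+2) := by ring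
      rw [this, ht]
      have h3 : (2:ℤ) * (u+v+1) / 2 = u + v + 1 := by omega
      rw [h3]
      have h4 : t = 2*u+1 := hu
      have h5 : b = 2*v+1 := hv
      rw [h4, h5]; ring


lemma odd_prime_pow_lemma (p : ℕ) (hp : p.Prime) (hodd : p ≠ 2) :
    ∀ k : ℕ, ∃ b c : ℤ, ¬ (p:ℤ) ∣ b ∧ ((p:ℤ)^(k+1)) ∣ b^2 + c^2 + 1 := by
  haveI : Fact p.Prime := ⟨hp⟩
  have hp2 : (2 : ZMod p) ≠ 0 := by
    have h2 : ((2:ℕ) : ZMod p) = 0 ↔ p ∣ 2 := ZMod.natCast_eq_zero_iff 2 p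
    intro h
    have : p ∣ 2 := h2.mp (by exact_mod_cast h)
    exact hodd ((Nat.prime_dvd_prime_iff_eq hp Nat.prime_two).mp this)
  intro k
  induction k with
  | zero =>
    obtain ⟨u, v, huv⟩ := ZMod.sq_add_sq p (-1 : ZMod p)
    have key : ∀ u v : ZMod p, u ^ 2 + v ^ 2 = -1 → u ≠ 0 →
        ∃ b c : ℤ, ¬ (p:ℤ) ∣ b ∧ ((p:ℤ)^(0+1)) ∣ b^2 + c^2 + 1 := by
      intro u v huv hu
      refine ⟨(u.val : ℤ), (v.val : ℤ), ?_, ?_⟩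
      · rw [← ZMod.intCast_zmod_eq_zero_iff_dvd]
        push_cast
        simpa [ZMod.natCast_val, ZMod.cast_id] using hu
      · rw [pow_one, ← ZMod.intCast_zmod_eq_zero_iff_dvd]
        push_cast
        simp [ZMod.natCast_val, ZMod.cast_id, huv]
    by_cases hu : u = 0
    · have hv : v ≠ 0 := by
        intro hv
        rw [hu, hv] at huv
        have h1 : (1 : ZMod p) = 0 := by linear_combination huv
        exact one_ne_zero h1
      exact key v u (by rw [← huv, hu]; ring) hv
    · exact key u v huv hu
  | succ k ih =>
    obtain ⟨b, c, hb, t, ht⟩ := ih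
    have hbz : ((b : ZMod p)) ≠ 0 := fun h => hb (by rwa [ZMod.intCast_zmod_eq_zero_iff_dvd] at h)
    have h2b : (2 * (b:ZMod p)) ≠ 0 := mul_ne_zero hp2 hbz
    obtain ⟨s, hsval⟩ : ∃ s : ℤ, ((s : ZMod p)) = (-(t:ZMod p)) * (2 * (b:ZMod p))⁻¹ :=
      ⟨(((-(t:ZMod p)) * (2 * (b:ZMod p))⁻¹).val : ℤ), by
        push_cast
        rw [ZMod.natCast_val, ZMod.cast_id]⟩
    have hdvd : (p:ℤ) ∣ t + 2 * b * s := by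
      rw [← ZMod.intCast_zmod_eq_zero_iff_dvd]
      push_cast
      rw [hsval]
      field_simp
      ring
    obtain ⟨w, hw⟩ := hdvd
    refine ⟨b + s * (p:ℤ)^(k+1), c, ?_, ⟨w + s^2 * (p:ℤ)^k, ?_⟩⟩
    · intro h
      apply hb
      have h2 : (p:ℤ) ∣ s * (p:ℤ)^(k+1) := Dvd.dvd.mul_left (dvd_pow_self _ (Nat.succ_ne_zero k)) s
      have := dvd_sub h h2
      simpa using this
    · linear_combination ht + (p:ℤ)^(k+1) * hw


def GoodRep (m : ℕ) : Prop := ∃ a b c : ℤ, (m:ℤ) ∣ 2*a^2 + b^2 + c^2 + 1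

lemma goodrep_mul {m n : ℕ} (h : Nat.Coprime m n) (hm : GoodRep m) (hn : GoodRep n) :
    GoodRep (m * n) := by
  obtain ⟨a₁, b₁, c₁, h₁⟩ := hm
  obtain ⟨a₂, b₂, c₂, h₂⟩ := hn
  have hcop : IsCoprime (m:ℤ) (n:ℤ) := Int.isCoprime_iff_gcd_eq_one.mpr (by exact_mod_cast h)
  obtain ⟨u, v, huv⟩ := hcop
  -- combined coordinates
  have mix : ∀ x₁ x₂ : ℤ, ((m:ℤ) ∣ (x₁ * v * n + x₂ * u * m) - x₁)
      ∧ ((n:ℤ) ∣ (x₁ * v * n + x₂ * u * m) - x₂) := by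
    intro x₁ x₂
    constructor
    · refine ⟨x₂ * u - x₁ * u, ?_⟩
      linear_combination x₁ * huv
    · refine ⟨x₁ * v - x₂ * v, ?_⟩
      linear_combination x₂ * huv
  set A := a₁ * v * n + a₂ * u * m
  set Bb := b₁ * v * n + b₂ * u * m
  set Cc := c₁ * v * n + c₂ * u * m
  have val : ∀ (q : ℕ) (x y z : ℤ), ((q:ℤ) ∣ A - x) → ((q:ℤ) ∣ Bb - y) → ((q:ℤ) ∣ Cc - z) →
      ((q:ℤ) ∣ 2*x^2+y^2+z^2+1) → ((q:ℤ) ∣ 2*A^2+Bb^2+Cc^2+1) := by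
    intro q x y z hA hB hC hv
    have h1 : (2*A^2+Bb^2+Cc^2+1) - (2*x^2+y^2+z^2+1) =
        2*(A+x)*(A-x) + (Bb+y)*(Bb-y) + (Cc+z)*(Cc-z) := by ring
    have h2 : (q:ℤ) ∣ (2*A^2+Bb^2+Cc^2+1) - (2*x^2+y^2+z^2+1) := by
      rw [h1]
      exact dvd_add (dvd_add (Dvd.dvd.mul_left hA _) (Dvd.dvd.mul_left hB _))
        (Dvd.dvd.mul_left hC _)
    have h4 : 2*A^2+Bb^2+Cc^2+1 =
        ((2*A^2+Bb^2+Cc^2+1) - (2*x^2+y^2+z^2+1)) + (2*x^2+y^2+z^2+1) := by ring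
    rw [h4]
    exact dvd_add h2 hv
  refine ⟨A, Bb, Cc, ?_⟩
  have hmd := val m a₁ b₁ c₁ (mix a₁ a₂).1 (mix b₁ b₂).1 (mix c₁ c₂).1 h₁
  have hnd := val n a₂ b₂ c₂ (mix a₁ a₂).2 (mix b₁ b₂).2 (mix c₁ c₂).2 h₂
  have hcop2 : IsCoprime (m:ℤ) (n:ℤ) := ⟨u, v, huv⟩
  have h4 := IsCoprime.mul_dvd hcop2 hmd hnd
  exact_mod_cast h4



lemma goodrep_all (m : ℕ) : 0 < m → ∃ a b c : ℤ, (m:ℤ) ∣ 2*a^2 + b^2 + c^2 + 1 := by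
  show 0 < m → GoodRep m
  induction m using Nat.recOnPosPrimePosCoprime with
  | prime_pow p n hpp hn =>
    intro _
    have hp' : p.Prime := hpp
    by_cases h2 : p = 2
    · subst h2
      obtain ⟨b, _, hb⟩ := two_pow_lemma n
      refine ⟨1, b, 2, ?_⟩
      have : ((2:ℤ))^n ∣ (2:ℤ)^(n+3) := pow_dvd_pow 2 (by omega)
      push_cast
      calc ((2:ℤ))^n ∣ (2:ℤ)^(n+3) := this
        _ ∣ b^2 + 7 := hb
        _ = 2*1^2 + b^2 + 2^2 + 1 := by ring
    · obtain ⟨b, c, _, hbc⟩ := odd_prime_pow_lemma p hp' h2 (n - 1)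
      refine ⟨0, b, c, ?_⟩
      have hne : n - 1 + 1 = n := by omega
      rw [hne] at hbc
      push_cast
      calc ((p:ℤ))^n ∣ b^2 + c^2 + 1 := hbc
        _ = 2*0^2 + b^2 + c^2 + 1 := by ring
  | zero => intro h; omega
  | one => intro _; exact ⟨0, 0, 0, by norm_num⟩
  | coprime a b ha hb hab iha ihb =>
    intro _
    exact goodrep_mul hab (iha (by omega)) (ihb (by omega))



theorem stmt_5
    {B : Type*} [AddCommGroup B]
    (n : ℕ) (hn : 4 ≤ n)
    (P : B) (hP : ¬ IsOfFinAddOrder P) :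
    (∀ x : Fin n → ℤ,
      (2 * (x ⟨0, by omega⟩) ^ 2 +
        ∑ i ∈ Finset.univ.erase (⟨0, by omega⟩ : Fin n), (x i) ^ 2) • P = 0
      ↔ ∀ i : Fin n, x i = 0) ∧
    (∀ (C : Type) (_ : AddCommGroup C) (_ : Finite C) (r : B →+ C),
      ∃ x : Fin n → ℤ, Finset.univ.gcd x = 1 ∧
        r ((2 * (x ⟨0, by omega⟩) ^ 2 +
          ∑ i ∈ Finset.univ.erase (⟨0, by omega⟩ : Fin n), (x i) ^ 2) • P) = 0) := by
  have h0n : 0 < n := by omega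
  set i0 : Fin n := ⟨0, by omega⟩ with hi0
  constructor
  · intro x
    constructor
    · intro h
      set K : ℤ := 2 * (x i0) ^ 2 + ∑ i ∈ Finset.univ.erase i0, (x i) ^ 2 with hK
      have hK0 : K = 0 := by
        by_contra hKne
        exact hP (isOfFinAddOrder_iff_zsmul_eq_zero.mpr ⟨K, hKne, h⟩)
      have hSnn : (0:ℤ) ≤ ∑ i ∈ Finset.univ.erase i0, (x i) ^ 2 :=
        Finset.sum_nonneg fun i _ => sq_nonneg _
      have hAnn : (0:ℤ) ≤ 2 * (x i0) ^ 2 := by positivity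
      have hA0 : 2 * (x i0) ^ 2 = 0 := by rw [hK] at hK0; linarith
      have hS0 : ∑ i ∈ Finset.univ.erase i0, (x i) ^ 2 = 0 := by rw [hK] at hK0; linarith
      intro i
      by_cases hi : i = i0
      · rw [hi]
        have h2 : (x i0) ^ 2 = 0 := by linarith
        exact sq_eq_zero_iff.mp h2
      · have hmem : i ∈ Finset.univ.erase i0 := Finset.mem_erase.mpr ⟨hi, Finset.mem_univ _⟩
        have := (Finset.sum_eq_zero_iff_of_nonneg fun j _ => sq_nonneg (x j)).mp hS0 i hmem
        exact sq_eq_zero_iff.mp this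
    · intro hx
      have : (2 * (x i0) ^ 2 + ∑ i ∈ Finset.univ.erase i0, (x i) ^ 2) = 0 := by
        simp [hx]
      rw [this, zero_zsmul]
  · intro C instC instF r
    have hfin : IsOfFinAddOrder (r P) := isOfFinAddOrder_of_finite (r P)
    set m : ℕ := addOrderOf (r P) with hm
    have hmpos : 0 < m := hfin.addOrderOf_pos
    obtain ⟨a, b, c, t, ht⟩ := goodrep_all m hmpos
    have h1n : 1 < n := by omega
    have h2n : 2 < n := by omega
    have h3n : 3 < n := by omega
    set x : Fin n → ℤ := fun i =>
      if i.val = 0 then a else if i.val = 1 then b else if i.val = 2 then c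
        else if i.val = 3 then 1 else 0 with hxdef
    have hx0 : x i0 = a := by simp [hxdef, hi0]
    have hx1 : x ⟨1, h1n⟩ = b := by norm_num [hxdef]
    have hx2 : x ⟨2, h2n⟩ = c := by norm_num [hxdef]
    have hx3 : x ⟨3, h3n⟩ = 1 := by norm_num [hxdef]
    refine ⟨x, ?_, ?_⟩
    · -- gcd = 1
      have hdvd : Finset.univ.gcd x ∣ 1 := hx3 ▸ Finset.gcd_dvd (Finset.mem_univ (⟨3, h3n⟩ : Fin n))
      have hnn : 0 ≤ Finset.univ.gcd x :=
        Int.nonneg_of_normalize_eq_self Finset.normalize_gcd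
      rcases Int.isUnit_iff.mp (isUnit_of_dvd_one hdvd) with h | h
      · exact h
      · omega
    · -- value
      have hsum : ∑ i ∈ Finset.univ.erase i0, (x i) ^ 2 = b^2 + c^2 + 1 := by
        have hsub : ({⟨1, h1n⟩, ⟨2, h2n⟩, ⟨3, h3n⟩} : Finset (Fin n)) ⊆ Finset.univ.erase i0 := by
          intro j hj
          fin_cases hj <;>
            exact Finset.mem_erase.mpr ⟨by simp [hi0, Fin.ext_iff], Finset.mem_univ _⟩
        rw [← Finset.sum_subset hsub ?zero]
        case zero =>
          intro j hjmem hjnot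
          have hj0 : j.val ≠ 0 := by
            have := (Finset.mem_erase.mp hjmem).1
            simpa [hi0, Fin.ext_iff] using this
          have hj123 : j.val ≠ 1 ∧ j.val ≠ 2 ∧ j.val ≠ 3 := by
            simp only [Finset.mem_insert, Finset.mem_singleton, not_or] at hjnot
            refine ⟨?_, ?_, ?_⟩ <;>
              [exact fun h => hjnot.1 (Fin.ext h); exact fun h => hjnot.2.1 (Fin.ext h);
                exact fun h => hjnot.2.2 (Fin.ext h)]
          simp [hxdef, hj0, hj123.1, hj123.2.1, hj123.2.2]
        rw [Finset.sum_insert (by simp [Fin.ext_iff]), Finset.sum_insert (by simp [Fin.ext_iff]),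
          Finset.sum_singleton, hx1, hx2, hx3]
        ring
      rw [hsum, hx0]
      have hval : 2 * a ^ 2 + (b^2 + c^2 + 1) = (m:ℤ) * t := by linarith [ht]
      rw [hval, AddMonoidHom.map_zsmul, mul_comm, mul_zsmul, natCast_zsmul,
        addOrderOf_nsmul_eq_zero, smul_zero]
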